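/- arXiv:2210.06259 — 3 statements merged into one kernel-verified Lean document; each statement's English description precedes it below -/
import Mathlib

section
/- Let β, κ, λ, T, Φ, X, Y, R be real numbers with 1 + βκΦ ≠ 0 and κ ≠ 0. Set V'(Φ) = β, H = −3β²κ/(1 + βκΦ), H' = 3β³κ²/(1 + βκΦ)², and Ω = R·β − (1/2)H'·X − H·Y. Suppose R satisfies the trace constraint −(1/κ + βΦ)·R = 3βY + (1/2)H·X − Ω·Φ − T − 4λ/κ. Then Ω = β(κT + 4λ); in particular Ω is independent of Φ, X and Y. -/
/-- Vector-field cancellation theorem: under the trace constraint of the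
modified Einstein equations, the mass coefficient `Ω` is independent of
`Φ`, `X`, `Y` and equals `β(κT + 4λ)`. -/
theorem vector_mass_cancellation (β κ lam T Φ X Y R Ω : ℝ)
    (hD : 1 + β * κ * Φ ≠ 0) (hκ : κ ≠ 0)
    (hΩ : Ω = R * β - (1 / 2) * (3 * β ^ 3 * κ ^ 2 / (1 + β * κ * Φ) ^ 2) * X
      - (-3 * β ^ 2 * κ / (1 + β * κ * Φ)) * Y)
    (hR : -(1 / κ + β * Φ) * R =
      3 * β * Y + (1 / 2) * (-3 * β ^ 2 * κ / (1 + β * κ * Φ)) * X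
        - Ω * Φ - T - 4 * lam / κ) :
    Ω = β * (κ * T + 4 * lam) := by
  field_simp at hΩ hR
  have key : (Ω - β * (κ * T + 4 * lam)) * (2 * κ * (1 + β * κ * Φ) ^ 2) = 0 := by
    linear_combination κ * (1 + β * κ * Φ) * hΩ - β * κ * (1 + β * κ * Φ) * hR
  rcases mul_eq_zero.mp key with h | h
  · linarith
  · exact absurd h (by positivity)
end

section
/- Under the hypotheses of the vector-field cancellation theorem (with V(Φ) = βΦ, H(Φ) = −3β²κ/(1+βκΦ), and R determined by the trace of the modified Einstein equations), if the trace of the matter energy-momentum tensor vanishes, T = 0, and λ ≠ 0, then Ω = 4βλ ≠ 0 (assuming β ≠ 0), so the vector field equation acquires a nonzero mass term proportional to βλ. -/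
/-- With traceless matter (`T = 0`) and nonvanishing vacuum term `λ ≠ 0`
(and `β ≠ 0`), the mass coefficient is `Ω = 4βλ ≠ 0`. -/
theorem vector_mass_nonzero (β κ lam Φ X Y R Ω : ℝ)
    (hD : 1 + β * κ * Φ ≠ 0) (hκ : κ ≠ 0) (hβ : β ≠ 0) (hlam : lam ≠ 0)
    (hΩ : Ω = β * R - (1 / 2) * (3 * β ^ 3 * κ ^ 2 / (1 + β * κ * Φ) ^ 2) * X
      - (-3 * β ^ 2 * κ / (1 + β * κ * Φ)) * Y)
    (hR : -(1 / κ + β * Φ) * R =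
      3 * β * Y + (1 / 2) * (-3 * β ^ 2 * κ / (1 + β * κ * Φ)) * X
        - Ω * Φ - (0 : ℝ) - 4 * lam / κ) :
    Ω = 4 * β * lam ∧ Ω ≠ 0 := by
  have h : Ω = 4 * β * lam := by
    field_simp at hΩ hR
    have key : 2 * (1 + β * κ * Φ) ^ 2 * κ * (Ω - 4 * β * lam) = 0 := by
      linear_combination (1 + β * κ * Φ) * (κ * hΩ - β * κ * hR)
    have h2 : 2 * (1 + β * κ * Φ) ^ 2 * κ ≠ 0 := by positivity
    have := mul_eq_zero.mp key
    rcases this with h' | h'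
    · exact absurd h' h2
    · linarith
  refine ⟨h, ?_⟩
  rw [h]
  positivity
end

section
/- Under the hypotheses of the vector-field cancellation theorem, if both the matter trace T and the vacuum term λ vanish, then Ω = 0, so the field equation reduces to the massless Maxwell form W^{αν}{}_{;ν} = 0. -/
/-- With vanishing matter trace and vanishing vacuum term, the mass
coefficient vanishes, `Ω = 0`, so the field equation is Maxwell's. -/
theorem vector_massless (β κ Φ X Y R Ω : ℝ)
    (hD : 1 + β * κ * Φ ≠ 0) (hκ : κ ≠ 0)
    (hΩ : Ω = β * R - (1 / 2) * (3 * β ^ 3 * κ ^ 2 / (1 + β * κ * Φ) ^ 2) * X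
      - (-3 * β ^ 2 * κ / (1 + β * κ * Φ)) * Y)
    (hR : -(1 / κ + β * Φ) * R =
      3 * β * Y + (1 / 2) * (-3 * β ^ 2 * κ / (1 + β * κ * Φ)) * X
        - Ω * Φ - (0 : ℝ) - 4 * (0 : ℝ) / κ) :
    Ω = 0 := by
  field_simp at hΩ hR
  have key : Ω * (2 * (1 + β * κ * Φ) ^ 2) = 0 := by
    have h := sub_eq_zero.mpr hΩ
    have h' := sub_eq_zero.mpr hR
    linear_combination (1 + β * κ * Φ) * h - β * (1 + β * κ * Φ) * h'
  have h2 : (2 : ℝ) * (1 + β * κ * Φ) ^ 2 ≠ 0 := by positivity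
  exact (mul_eq_zero.mp key).resolve_right h2
end
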